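/- For the q-derivative D_q acting on the variable a, D_q^n { (as;q)_∞ / ((at;q)_∞ (aω;q)_∞) } = (t/(1-q))^n · (as;q)_∞/((at;q)_∞ (aω;q)_∞) · ∑_{k=0}^n (-1)^k q^{-binom(k,2)} ((q^{-n};q)_k (s/ω;q)_k (at;q)_k / ((as;q)_k (q;q)_k)) (ω q^n / t)^k. -/

import Mathlib

noncomputable def qPoch (x q : ℂ) (n : ℕ) : ℂ := ∏ j ∈ Finset.range n, (1 - x * q ^ j)

noncomputable def qPochInf (x q : ℂ) : ℂ := ∏' j : ℕ, (1 - x * q ^ j)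

noncomputable def qBinom (q : ℂ) (n k : ℕ) : ℂ := qPoch q q n / (qPoch q q k * qPoch q q (n - k))

noncomputable def Dq (q : ℂ) (f : ℂ → ℂ) : ℂ → ℂ := fun a => (f a - f (q * a)) / ((1 - q) * a)

noncomputable def Dqinv (q : ℂ) (f : ℂ → ℂ) : ℂ → ℂ := fun a => (f (q⁻¹ * a) - f a) / ((q⁻¹ - 1) * a)

noncomputable def mPoch {m : ℕ} (a : Fin m → ℂ) (q : ℂ) (k : ℕ) : ℂ := ∏ i, qPoch (a i) q k

noncomputable def phi {r : ℕ} (a : Fin (r + 1) → ℂ) (b : Fin r → ℂ) (q x y : ℂ) (n : ℕ) : ℂ :=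
  ∑ k ∈ Finset.range (n + 1), qBinom q n k * (mPoch a q k / mPoch b q k) * x ^ k * y ^ (n - k)

noncomputable def psi {r : ℕ} (a : Fin (r + 1) → ℂ) (b : Fin r → ℂ) (q x y : ℂ) (n : ℕ) : ℂ :=
  ∑ k ∈ Finset.range (n + 1), qBinom q n k * (mPoch a q k / mPoch b q k) *
    q ^ ((((k + 1).choose 2 : ℕ) : ℤ) - (n : ℤ) * (k : ℤ)) * x ^ k * y ^ (n - k)

/-! ### Auxiliary lemmas -/

lemma qPoch_succ (x q : ℂ) (k : ℕ) : qPoch x q (k+1) = qPoch x q k * (1 - x * q ^ k) :=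
  Finset.prod_range_succ _ _

lemma qPoch_succ' (x q : ℂ) (k : ℕ) : qPoch x q (k+1) = (1 - x) * qPoch (x*q) q k := by
  rw [qPoch, Finset.prod_range_succ']
  simp only [pow_zero, mul_one, qPoch]
  rw [mul_comm]
  congr 1
  apply Finset.prod_congr rfl
  intro j _
  rw [pow_succ']
  ring_nf

lemma qPoch_zero (x q : ℂ) : qPoch x q 0 = 1 := rfl

lemma qPoch_one (x q : ℂ) : qPoch x q 1 = 1 - x := by simp [qPoch]

lemma one_sub_ne {z : ℂ} (h : ‖z‖ < 1) : (1:ℂ) - z ≠ 0 := by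
  intro h0
  have hz : z = 1 := by linear_combination -h0
  rw [hz] at h
  simp at h

lemma abs_qmul_lt {q x : ℂ} (hq : ‖q‖ < 1) (hx : ‖x‖ < 1) :
    ‖q*x‖ < 1 := by
  rw [norm_mul]
  calc ‖q‖ * ‖x‖ ≤ 1 * ‖x‖ :=
        mul_le_mul_of_nonneg_right hq.le (norm_nonneg _)
    _ = ‖x‖ := one_mul _
    _ < 1 := hx

lemma qPoch_ne_zero {x q : ℂ} (hx : ‖x‖ < 1) (hq : ‖q‖ ≤ 1) (k : ℕ) :
    qPoch x q k ≠ 0 := by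
  rw [qPoch, Finset.prod_ne_zero_iff]
  intro j _ h
  have h1 : x * q ^ j = 1 := by linear_combination -h
  have : ‖x * q ^ j‖ < 1 := by
    rw [norm_mul, norm_pow]
    calc ‖x‖ * ‖q‖ ^ j ≤ ‖x‖ * 1 :=
          mul_le_mul_of_nonneg_left (pow_le_one₀ (norm_nonneg _) hq)
            (norm_nonneg _)
      _ < 1 := by rwa [mul_one]
  rw [h1] at this; simp at this

lemma multipliable_qp (x q : ℂ) (hq : ‖q‖ < 1) :
    Multipliable (fun j : ℕ => 1 - x * q ^ j) := by
  obtain ⟨N, hN⟩ : ∃ N : ℕ, ‖x‖ * ‖q‖ ^ N < 1/2 := by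
    have h := tendsto_pow_atTop_nhds_zero_of_lt_one (norm_nonneg q) hq
    have h2 := h.const_mul ‖x‖
    rw [mul_zero] at h2
    exact (h2.eventually (eventually_lt_nhds (by norm_num : (0:ℝ) < 1/2))).exists
  apply Multipliable.comp_nat_add (k := N)
  have key : ∀ n : ℕ, ‖x * q ^ (n + N)‖ ≤ 1/2 := by
    intro n
    rw [norm_mul, norm_pow, pow_add]
    calc ‖x‖ * (‖q‖ ^ n * ‖q‖ ^ N)
        ≤ ‖x‖ * (1 * ‖q‖ ^ N) := by
          apply mul_le_mul_of_nonneg_left _ (norm_nonneg _)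
          apply mul_le_mul_of_nonneg_right (pow_le_one₀ (norm_nonneg _) hq.le)
            (pow_nonneg (norm_nonneg _) _)
      _ = ‖x‖ * ‖q‖ ^ N := by ring
      _ ≤ 1/2 := hN.le
  have hsum : Summable (fun n : ℕ => Complex.log (1 - x * q ^ (n + N))) := by
    have hgeo : Summable (fun n : ℕ =>
        (3/2) * (‖x‖ * ‖q‖ ^ N) * (‖q‖^n)) :=
      (summable_geometric_of_lt_one (norm_nonneg _) hq).mul_left _
    apply Summable.of_norm_bounded hgeo
    intro n
    have he : (1 : ℂ) - x * q ^ (n + N) = 1 + (-(x * q ^ (n+N))) := by ring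
    rw [he]
    calc ‖Complex.log (1 + (-(x * q ^ (n+N))))‖ ≤ 3/2 * ‖(-(x * q ^ (n+N)))‖ := by
          apply Complex.norm_log_one_add_half_le_self
          rw [norm_neg]; exact key n
      _ = 3/2 * (‖x‖ * ‖q‖ ^ N) * ‖q‖ ^ n := by
          rw [norm_neg, norm_mul, norm_pow, pow_add]; ring
  exact Complex.multipliable_of_summable_log hsum

lemma qPochInf_shift (x q : ℂ) (hq : ‖q‖ < 1) :
    qPochInf x q = (1 - x) * qPochInf (x*q) q := by
  have hm : Multipliable (fun n : ℕ => (1 : ℂ) - x * q ^ (n + 1)) := by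
    have := multipliable_qp (x*q) q hq
    apply this.congr
    intro n
    rw [pow_succ']
    ring
  rw [qPochInf, tprod_eq_zero_mul' (f := fun j : ℕ => 1 - x * q ^ j) hm]
  simp only [pow_zero, mul_one, qPochInf]
  congr 1
  apply tprod_congr
  intro j
  rw [pow_succ']
  ring_nf

/-- The `a`-free coefficient in the sum. -/
noncomputable def Bc (q s t ω : ℂ) (n k : ℕ) : ℂ :=
  (-1)^k * q^(-((k.choose 2 : ℕ) : ℤ)) *
    (qPoch (q^(-(n:ℤ))) q k * qPoch (s/ω) q k / qPoch q q k) * (ω*q^n/t)^k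

lemma Bc_zero (q s t ω : ℂ) (n : ℕ) : Bc q s t ω n 0 = 1 := by
  simp [Bc, qPoch]

lemma Bc_top (q s t ω : ℂ) (hq0 : q ≠ 0) (n : ℕ) : Bc q s t ω n (n+1) = 0 := by
  have h : qPoch (q^(-(n:ℤ))) q (n+1) = 0 := by
    rw [qPoch]
    apply Finset.prod_eq_zero (Finset.self_mem_range_succ n)
    rw [zpow_neg, zpow_natCast, inv_mul_cancel₀ (pow_ne_zero _ hq0), sub_self]
  rw [Bc, h]
  ring

lemma frac3 (t1 t2 t3 N1 N2 N3 D1 D2 D3 : ℂ) (e1 : t1 = N1/D1) (e2 : t2 = N2/D2)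
    (e3 : t3 = N3/D3) (h1 : D1 ≠ 0) (h2 : D2 ≠ 0) (h3 : D3 ≠ 0)
    (h : N1*(D2*D3) = (N2*D3 + N3*D2)*D1) : t1 = t2 + t3 := by
  rw [e1, e2, e3, div_add_div _ _ h2 h3, div_eq_div_iff h1 (mul_ne_zero h2 h3)]
  linear_combination h

lemma frac4 (t1 t2 t3 t4 N1 N2 N3 N4 D1 D2 D3 D4 : ℂ)
    (e1 : t1 = N1/D1) (e2 : t2 = N2/D2) (e3 : t3 = N3/D3) (e4 : t4 = N4/D4)
    (h1 : D1≠0) (h2 : D2≠0) (h3 : D3≠0) (h4 : D4≠0)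
    (h : (N1*D2 - N2*D1)*(D3*D4) = (N3*D4 + N4*D3)*(D1*D2)) : t1 - t2 = t3 + t4 := by
  rw [e1, e2, e3, e4, div_sub_div _ _ h1 h2, div_add_div _ _ h3 h4,
    div_eq_div_iff (mul_ne_zero h1 h2) (mul_ne_zero h3 h4)]
  linear_combination h

lemma coeffId (q s t ω : ℂ) (hq0 : q ≠ 0) (hq1 : ‖q‖ < 1) (ht : t ≠ 0)
    (hω : ω ≠ 0) (n k : ℕ) :
    t * Bc q s t ω (n+1) (k+1)
      = t * q^(k+1) * Bc q s t ω n (k+1) + (ω - s*q^k) * Bc q s t ω n k := by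
  have hZ : qPoch q q k ≠ 0 := qPoch_ne_zero hq1 hq1.le k
  have hE : (1:ℂ) - q * q^k ≠ 0 := by
    intro h
    have h1 : q * q^k = 1 := by linear_combination -h
    have : ‖q * q^k‖ < 1 := by
      rw [norm_mul, norm_pow]
      calc ‖q‖ * ‖q‖ ^ k ≤ ‖q‖ * 1 :=
            mul_le_mul_of_nonneg_left (pow_le_one₀ (norm_nonneg _) hq1.le)
              (norm_nonneg _)
        _ < 1 := by rwa [mul_one]
    rw [h1] at this; simp at this
  have hqn : (q:ℂ)^n ≠ 0 := pow_ne_zero _ hq0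
  have hqk : (q:ℂ)^k ≠ 0 := pow_ne_zero _ hq0
  have htk : (t:ℂ)^k ≠ 0 := pow_ne_zero _ ht
  set X := qPoch (q^(-(n:ℤ))) q k with hX
  set Y := qPoch (s/ω) q k with hY
  set Z := qPoch q q k with hZd
  set U := q ^ (-((k.choose 2:ℕ)):ℤ) with hU
  set W := ((ω * q^n : ℂ))^k with hW
  set P := ((-1 : ℂ))^k with hP
  have e1 : qPoch (q^(-(((n+1):ℕ)):ℤ)) q (k+1) = ((q^n*q - 1)/(q^n*q)) * X := by
    rw [qPoch_succ']
    have h1 : (q : ℂ)^(-(((n+1):ℕ)):ℤ) * q = q^(-(n:ℤ)) := by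
      rw [show (-(((n+1):ℕ)):ℤ) = -(n:ℤ) + -1 by push_cast; ring, zpow_add₀ hq0,
        zpow_neg_one, inv_mul_cancel_right₀ hq0]
    have h2 : (1 : ℂ) - q^(-(((n+1):ℕ)):ℤ) = (q^n*q - 1)/(q^n*q) := by
      rw [zpow_neg, zpow_natCast, eq_div_iff (mul_ne_zero hqn hq0)]
      push_cast
      rw [pow_succ]
      field_simp
    rw [h1, h2]
  have e2 : qPoch (q^(-(n:ℤ))) q (k+1) = X * ((q^n - q^k)/q^n) := by
    rw [qPoch_succ]
    congr 1
    rw [zpow_neg, zpow_natCast, eq_div_iff hqn]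
    field_simp
  have e3 : qPoch (s/ω) q (k+1) = Y * ((ω - s*q^k)/ω) := by
    rw [qPoch_succ]
    congr 1
    rw [eq_div_iff hω]
    field_simp
  have e4 : qPoch q q (k+1) = Z * (1 - q*q^k) := by rw [qPoch_succ]
  have e5 : (q:ℂ) ^ (-((((k+1)).choose 2 : ℕ)):ℤ) = U / q^k := by
    have hch : (k+1).choose 2 = k.choose 2 + k := by
      rw [show 2 = 1 + 1 from rfl, Nat.choose_succ_succ, Nat.choose_one_right, Nat.add_comm]
    rw [hch, hU]
    push_cast
    rw [neg_add, zpow_add₀ hq0, div_eq_mul_inv]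
    congr 1
    rw [zpow_neg, zpow_natCast]
  have e6 : ((ω * q^(n+1) / t : ℂ))^(k+1) = W * (ω*q^n) * (q^k*q) / (t^k*t) := by
    have hb : (ω * q^(n+1) / t : ℂ) = (ω*q^n)*q/t := by rw [pow_succ]; ring
    rw [hb, div_pow, mul_pow, pow_succ, pow_succ, pow_succ]
  have e7 : ((ω * q^n / t : ℂ))^(k+1) = W * (ω*q^n) / (t^k*t) := by
    rw [div_pow, pow_succ, pow_succ]
  have e8 : ((ω * q^n / t : ℂ))^k = W / t^k := by rw [div_pow]
  have e9 : ((-1 : ℂ))^(k+1) = P * (-1) := pow_succ _ _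
  set E := (1:ℂ) - q*q^k with hEd
  clear_value X Y Z U W P E
  rw [Bc, Bc, Bc, e1, e2, e3, e4, e5, e6, e7, e8, e9, pow_succ q k,
    ← hX, ← hY, ← hZd, ← hU, ← hP]
  refine frac3 _ _ _
    (t*(P*(-1)*U*(q^n*q - 1)*X*Y*(ω - s*q^k)*W*(ω*q^n)*(q^k*q)))
    (t*(q^k*q)*(P*(-1)*U*X*(q^n - q^k)*Y*(ω - s*q^k)*W*(ω*q^n)))
    ((ω - s*q^k)*(P*U*X*Y*W))
    (q^k*(q^n*q)*ω*(Z*E)*(t^k*t))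
    (q^k*q^n*ω*(Z*E)*(t^k*t))
    (Z*t^k)
    (by ring) (by ring) (by ring)
    (by apply_rules [mul_ne_zero])
    (by apply_rules [mul_ne_zero])
    (by apply_rules [mul_ne_zero])
    (by rw [hEd]; ring)

lemma term_step (q a s t ω : ℂ) (k : ℕ) (h1s : 1-a*s ≠ 0) (h1t : 1-a*t ≠ 0)
    (hPS : qPoch (a*s) q k ≠ 0) (hPS1 : qPoch (a*s) q (k+1) ≠ 0) :
    qPoch (a*t) q k / qPoch (a*s) q k
      - ((1-a*t)*(1-a*ω)/(1-a*s)) * (qPoch (q*a*t) q k / qPoch (q*a*s) q k)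
    = a*t*q^k*(qPoch (a*t) q k / qPoch (a*s) q k)
      + a*(ω-s*q^k)*(qPoch (a*t) q (k+1) / qPoch (a*s) q (k+1)) := by
  have h1sq : 1 - a*s*q^k ≠ 0 := by
    have h := hPS1
    rw [qPoch_succ] at h
    exact (mul_ne_zero_iff.mp h).2
  have hQt : qPoch (q*a*t) q k = qPoch (a*t) q (k+1) / (1-a*t) := by
    rw [eq_div_iff h1t]
    have h := qPoch_succ' (a*t) q k
    rw [show a*t*q = q*a*t from by ring] at h
    linear_combination -h
  have hQs : qPoch (q*a*s) q k = qPoch (a*s) q (k+1) / (1-a*s) := by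
    rw [eq_div_iff h1s]
    have h := qPoch_succ' (a*s) q k
    rw [show a*s*q = q*a*s from by ring] at h
    linear_combination -h
  rw [hQt, hQs, qPoch_succ (a*t) q k, qPoch_succ (a*s) q k]
  set PT := qPoch (a*t) q k with hPT
  set PS := qPoch (a*s) q k with hPSd
  set A := (1:ℂ)-a*s with hA
  set B := (1:ℂ)-a*t with hB
  set G := (1:ℂ)-a*ω with hG
  set Es := (1:ℂ)-a*s*q^k with hEs
  set Et := (1:ℂ)-a*t*q^k with hEt
  clear_value PT PS A B G Es Et
  rw [div_div_eq_mul_div]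
  exact frac4 _ _ _ _ PT (B*G*(PT*Et)*A) (a*t*q^k*PT) (a*(ω-s*q^k)*(PT*Et))
    PS (A*(B*(PS*Es))) PS (PS*Es)
    (by ring) (by ring) (by ring) (by ring)
    hPS (by apply_rules [mul_ne_zero]) hPS (by apply_rules [mul_ne_zero])
    (by rw [hA, hB, hG, hEs, hEt]; ring)

lemma F_shift (x y z d1 d2 d3 : ℂ) (h1 : d1 ≠ 0) (h2 : d2 ≠ 0) (h3 : d3 ≠ 0) :
    x/(y*z) = (d1*x/((d2*y)*(d3*z))) * (d2*d3/d1) := by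
  calc x/(y*z) = ((d1*d2*d3)*x)/((d1*d2*d3)*(y*z)) :=
        (mul_div_mul_left _ _ (by apply_rules [mul_ne_zero])).symm
    _ = (d1*x/((d2*y)*(d3*z))) * (d2*d3/d1) := by ring

lemma sum_step (q s t ω : ℂ) (hq0 : q ≠ 0) (hq1 : ‖q‖ < 1) (ht : t ≠ 0)
    (hω : ω ≠ 0) (n : ℕ) (a : ℂ) (h1t : 1 - a*t ≠ 0)
    (hs : ∀ k ≤ n+1, qPoch (a*s) q k ≠ 0) :
    (∑ k ∈ Finset.range (n+1), Bc q s t ω n k * (qPoch (a*t) q k / qPoch (a*s) q k))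
      - ((1-a*t)*(1-a*ω)/(1-a*s)) *
        ∑ k ∈ Finset.range (n+1), Bc q s t ω n k * (qPoch (q*a*t) q k / qPoch (q*a*s) q k)
    = t * a * ∑ k ∈ Finset.range (n+1+1),
        Bc q s t ω (n+1) k * (qPoch (a*t) q k / qPoch (a*s) q k) := by
  have h1s : (1:ℂ) - a*s ≠ 0 := by
    have := hs 1 (by omega)
    rwa [qPoch_one] at this
  have step1 : (∑ k ∈ Finset.range (n+1), Bc q s t ω n k * (qPoch (a*t) q k / qPoch (a*s) q k))
      - ((1-a*t)*(1-a*ω)/(1-a*s)) *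
        ∑ k ∈ Finset.range (n+1), Bc q s t ω n k * (qPoch (q*a*t) q k / qPoch (q*a*s) q k)
      = ∑ k ∈ Finset.range (n+1),
          (a*t*q^k*(Bc q s t ω n k)*(qPoch (a*t) q k / qPoch (a*s) q k)
            + a*(ω-s*q^k)*(Bc q s t ω n k)*(qPoch (a*t) q (k+1) / qPoch (a*s) q (k+1))) := by
    rw [Finset.mul_sum, ← Finset.sum_sub_distrib]
    apply Finset.sum_congr rfl
    intro k hk
    have hk' := Finset.mem_range.mp hk
    have ts := term_step q a s t ω k h1s h1t (hs k (by omega)) (hs (k+1) (by omega))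
    linear_combination (Bc q s t ω n k) * ts
  rw [step1, Finset.sum_add_distrib]
  have hsum1 : ∑ k ∈ Finset.range (n+1),
        a*t*q^k*(Bc q s t ω n k)*(qPoch (a*t) q k / qPoch (a*s) q k)
      = a*t + ∑ k ∈ Finset.range (n+1),
          a*t*q^(k+1)*(Bc q s t ω n (k+1))*(qPoch (a*t) q (k+1) / qPoch (a*s) q (k+1)) := by
    rw [Finset.sum_range_succ', Finset.sum_range_succ, Bc_top q s t ω hq0 n]
    simp only [Bc_zero, qPoch_zero, pow_zero, mul_zero, zero_mul, mul_one, add_zero]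
    ring
  rw [hsum1]
  have combined : (∑ k ∈ Finset.range (n+1),
        a*t*q^(k+1)*(Bc q s t ω n (k+1))*(qPoch (a*t) q (k+1) / qPoch (a*s) q (k+1)))
      + ∑ k ∈ Finset.range (n+1),
          a*(ω-s*q^k)*(Bc q s t ω n k)*(qPoch (a*t) q (k+1) / qPoch (a*s) q (k+1))
      = ∑ k ∈ Finset.range (n+1),
          t*a*(Bc q s t ω (n+1) (k+1) * (qPoch (a*t) q (k+1) / qPoch (a*s) q (k+1))) := by
    rw [← Finset.sum_add_distrib]
    apply Finset.sum_congr rfl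
    intro k _
    have ci := coeffId q s t ω hq0 hq1 ht hω n k
    linear_combination (-(a * (qPoch (a*t) q (k+1) / qPoch (a*s) q (k+1)))) * ci
  rw [add_assoc, combined, Finset.sum_range_succ' (fun k =>
    Bc q s t ω (n+1) k * (qPoch (a*t) q k / qPoch (a*s) q k)) (n+1)]
  simp only [Bc_zero, qPoch_zero, one_mul, div_one]
  rw [mul_add, mul_one, Finset.mul_sum]
  ring

lemma stmt10_aux (q s t ω : ℂ) (hq0 : q ≠ 0) (hq1 : ‖q‖ < 1)
    (ht : t ≠ 0) (hω : ω ≠ 0) :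
    ∀ (n : ℕ) (a : ℂ), a ≠ 0 → ‖a*t‖ < 1 → ‖a*ω‖ < 1 →
    (∀ k ≤ n, qPoch (a*s) q k ≠ 0) →
    (Dq q)^[n] (fun a => qPochInf (a * s) q / (qPochInf (a * t) q * qPochInf (a * ω) q)) a
      = (t/(1-q))^n * (qPochInf (a*s) q / (qPochInf (a*t) q * qPochInf (a*ω) q))
        * ∑ k ∈ Finset.range (n+1), Bc q s t ω n k * (qPoch (a*t) q k / qPoch (a*s) q k) := by
  intro n
  induction n with
  | zero =>
    intro a ha hat haω hs
    simp [Finset.sum_range_one, Bc_zero, qPoch_zero]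
  | succ n IH =>
    intro a ha hat haω hs
    have h1q : (1:ℂ) - q ≠ 0 := one_sub_ne hq1
    have h1s : (1:ℂ) - a*s ≠ 0 := by
      have := hs 1 (by omega)
      rwa [qPoch_one] at this
    have h1t : (1:ℂ) - a*t ≠ 0 := one_sub_ne hat
    have h1ω : (1:ℂ) - a*ω ≠ 0 := one_sub_ne haω
    have hqa0 : q*a ≠ 0 := mul_ne_zero hq0 ha
    have hqat : ‖(q*a)*t‖ < 1 := by
      rw [show (q*a)*t = q*(a*t) from by ring]
      exact abs_qmul_lt hq1 hat
    have hqaω : ‖(q*a)*ω‖ < 1 := by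
      rw [show (q*a)*ω = q*(a*ω) from by ring]
      exact abs_qmul_lt hq1 haω
    have hqs : ∀ k ≤ n, qPoch ((q*a)*s) q k ≠ 0 := by
      intro k hk
      have h2 := hs (k+1) (by omega)
      rw [qPoch_succ'] at h2
      rw [show a*s*q = q*a*s from by ring] at h2
      exact (mul_ne_zero_iff.mp h2).2
    rw [Function.iterate_succ_apply']
    have hD : (Dq q) ((Dq q)^[n]
        (fun a => qPochInf (a * s) q / (qPochInf (a * t) q * qPochInf (a * ω) q))) a
      = ((Dq q)^[n] (fun a => qPochInf (a * s) q / (qPochInf (a * t) q * qPochInf (a * ω) q)) a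
          - (Dq q)^[n]
              (fun a => qPochInf (a * s) q / (qPochInf (a * t) q * qPochInf (a * ω) q)) (q*a))
        / ((1-q)*a) := rfl
    rw [hD, IH a ha hat haω (fun k hk => hs k (by omega)), IH (q*a) hqa0 hqat hqaω hqs]
    have hshift_s : qPochInf (a*s) q = (1-a*s) * qPochInf (q*a*s) q := by
      rw [qPochInf_shift (a*s) q hq1, show a*s*q = q*a*s from by ring]
    have hshift_t : qPochInf (a*t) q = (1-a*t) * qPochInf (q*a*t) q := by
      rw [qPochInf_shift (a*t) q hq1, show a*t*q = q*a*t from by ring]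
    have hshift_ω : qPochInf (a*ω) q = (1-a*ω) * qPochInf (q*a*ω) q := by
      rw [qPochInf_shift (a*ω) q hq1, show a*ω*q = q*a*ω from by ring]
    have hFq : qPochInf (q*a*s) q / (qPochInf (q*a*t) q * qPochInf (q*a*ω) q)
        = (qPochInf (a*s) q / (qPochInf (a*t) q * qPochInf (a*ω) q))
          * ((1-a*t)*(1-a*ω)/(1-a*s)) := by
      rw [hshift_s, hshift_t, hshift_ω]
      exact F_shift _ _ _ _ _ _ h1s h1t h1ω
    rw [hFq, div_eq_iff (mul_ne_zero h1q ha), pow_succ]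
    have key := sum_step q s t ω hq0 hq1 ht hω n a h1t hs
    have hc : (t/(1-q))*(1-q) = t := div_mul_cancel₀ t h1q
    linear_combination
      ((t/(1-q))^n * (qPochInf (a*s) q / (qPochInf (a*t) q * qPochInf (a*ω) q))) * key
      - ((t/(1-q))^n * (qPochInf (a*s) q / (qPochInf (a*t) q * qPochInf (a*ω) q))
          * (∑ k ∈ Finset.range (n+1+1),
              Bc q s t ω (n+1) k * (qPoch (a*t) q k / qPoch (a*s) q k)) * a) * hc

/-- `D_q^n {(as;q)_∞/((at;q)_∞(aω;q)_∞)}`. -/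
theorem stmt10 (q a s t ω : ℂ) (hq0 : q ≠ 0) (hq1 : ‖q‖ < 1) (ha : a ≠ 0)
    (ht : t ≠ 0) (hω : ω ≠ 0) (hat : ‖a * t‖ < 1)
    (haω : ‖a * ω‖ < 1) (n : ℕ)
    (hs : ∀ k ≤ n, qPoch (a * s) q k ≠ 0) :
    (Dq q)^[n] (fun a => qPochInf (a * s) q / (qPochInf (a * t) q * qPochInf (a * ω) q)) a
      = (t / (1 - q)) ^ n
          * (qPochInf (a * s) q / (qPochInf (a * t) q * qPochInf (a * ω) q))
          * ∑ k ∈ Finset.range (n + 1),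
              (-1) ^ k * q ^ (-((k.choose 2 : ℕ) : ℤ))
                * (qPoch (q ^ (-(n : ℤ))) q k * qPoch (s / ω) q k * qPoch (a * t) q k
                    / (qPoch (a * s) q k * qPoch q q k))
                * (ω * q ^ n / t) ^ k := by
  rw [stmt10_aux q s t ω hq0 hq1 ht hω n a ha hat haω hs]
  congr 1
  apply Finset.sum_congr rfl
  intro k _
  rw [Bc]
  ring
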